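/- There exists a universal constant c ∈ (0, ∞) such that for every p ∈ [2, ∞) and every α ∈ (0, ∞), sup_{n∈ℕ} ‖Δ_{[n]}^{−α}‖_{p→p} ≥ c · (log p)^α / (2^α · Γ(1+α)); that is, there exist n ∈ ℕ and a nonzero h ∈ L_p^0({−1,1}^n) with ‖Δ_{[n]}^{−α} h‖_p ≥ c·(log p)^α/(2^α Γ(1+α))·‖h‖_p, where Γ is the Gamma function. -/

import Mathlib

open Finset

/-- The normalized `L_p` norm of a function on the discrete hypercube `{-1,1}^n`
(coordinates encoded by `Bool`). -/
noncomputable def pnorm {n : ℕ} (p : ℝ) (h : (Fin n → Bool) → ℝ) : ℝ :=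
  ((∑ ε : Fin n → Bool, |h ε| ^ p) / 2 ^ n) ^ (1 / p)

/-- The Walsh function `W_A(ε) = Π_{j ∈ A} ε_j`. -/
def walsh {n : ℕ} (A : Finset (Fin n)) (ε : Fin n → Bool) : ℝ :=
  ∏ j ∈ A, (if ε j then (1 : ℝ) else -1)

/-- The Fourier–Walsh coefficient `ĥ(A) = 2^{-n} Σ_ε h(ε) W_A(ε)`. -/
noncomputable def fourierCoef {n : ℕ} (h : (Fin n → Bool) → ℝ) (A : Finset (Fin n)) : ℝ :=
  (∑ ε : Fin n → Bool, h ε * walsh A ε) / 2 ^ n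

/-- `Δ_S^α h = Σ_{A ∩ S ≠ ∅} |A ∩ S|^α ĥ(A) W_A`. -/
noncomputable def deltaPow {n : ℕ} (S : Finset (Fin n)) (α : ℝ) (h : (Fin n → Bool) → ℝ) :
    (Fin n → Bool) → ℝ :=
  fun ε => ∑ A : Finset (Fin n),
    if (A ∩ S).Nonempty then ((A ∩ S).card : ℝ) ^ α * fourierCoef h A * walsh A ε else 0

/-- `E_S h`: averaging of `h` over the coordinates in `S`. -/
noncomputable def condAvg {n : ℕ} (S : Finset (Fin n)) (h : (Fin n → Bool) → ℝ) :
    (Fin n → Bool) → ℝ :=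
  fun ε => (∑ δ : Fin n → Bool, h (fun j => if j ∈ S then δ j else ε j)) / 2 ^ n

namespace DPL

open MeasureTheory Set

/-! ### Combinatorial preliminaries -/

def dd {n : ℕ} (ε : Fin n → Bool) : ℕ := (univ.filter fun j => ε j = false).card

def PP {n : ℕ} (u : ℝ) (ε : Fin n → Bool) : ℝ :=
  ∏ j, (1 + u * (if ε j then (1:ℝ) else -1))

variable {n : ℕ}

lemma dd_le (ε : Fin n → Bool) : dd ε ≤ n := by
  simpa [dd] using (card_filter_le univ fun j => ε j = false)

lemma card_true (ε : Fin n → Bool) :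
    (univ.filter fun j => ε j = true).card = n - dd ε := by
  have h := card_filter_add_card_filter_not (s := (univ : Finset (Fin n)))
      (p := fun j => ε j = true)
  simp only [Bool.not_eq_true, card_univ, Fintype.card_fin] at h
  have hd : dd ε = (univ.filter fun j => ε j = false).card := rfl
  have h2 : ((univ : Finset (Fin n)).filter fun j => ε j = false)
      = (univ.filter fun j => ¬ (ε j = true)) := by ext j; simp
  have h3 := dd_le ε
  omega

lemma sum_pow_walsh (u : ℝ) (ε : Fin n → Bool) :
    ∑ A : Finset (Fin n), u ^ A.card * walsh A ε = PP u ε := by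
  have h := Finset.prod_add (fun j => u * (if ε j then (1:ℝ) else -1)) (fun _ => (1:ℝ))
      (univ : Finset (Fin n))
  simp only [Finset.prod_const_one, mul_one, Finset.powerset_univ] at h
  rw [PP]
  have h2 : ∀ j : Fin n, (1 : ℝ) + u * (if ε j then (1:ℝ) else -1)
      = u * (if ε j then (1:ℝ) else -1) + 1 := fun j => by ring
  simp only [h2]
  rw [h]
  refine Finset.sum_congr rfl fun A _ => ?_
  rw [walsh, Finset.prod_mul_distrib, Finset.prod_const]

lemma PP_eq (u : ℝ) (ε : Fin n → Bool) :
    PP u ε = (1+u)^(n - dd ε) * (1-u)^(dd ε) := by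
  rw [PP, ← Finset.prod_filter_mul_prod_filter_not univ (fun j => ε j = true)]
  congr 1
  · rw [Finset.prod_congr rfl (fun j hj => ?_), Finset.prod_const, card_true]
    rw [mem_filter] at hj
    rw [hj.2]; norm_num
  · rw [Finset.prod_congr rfl (fun j hj => ?_), Finset.prod_const]
    · congr 1
      rw [dd]; congr 1; ext j; simp
    · rw [mem_filter] at hj
      simp only [Bool.not_eq_true] at hj
      rw [hj.2]; norm_num [sub_eq_add_neg]

lemma sum_PP (u : ℝ) : ∑ ε : Fin n → Bool, PP u ε = 2^n := by
  have h := Finset.prod_univ_sum (fun _ : Fin n => (univ : Finset Bool))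
      (fun j b => 1 + u * (if b then (1:ℝ) else -1))
  rw [Fintype.piFinset_univ] at h
  have h' : ∑ ε : Fin n → Bool, PP u ε
      = ∏ j : Fin n, (∑ b : Bool, (1 + u * (if b then (1:ℝ) else -1))) := h.symm
  rw [h']
  have h2 : ∑ b : Bool, (1 + u * (if b then (1:ℝ) else -1)) = 2 := by
    simp [Fintype.sum_bool]; ring
  rw [h2, Finset.prod_const, card_univ, Fintype.card_fin]

def flipb {n : ℕ} (ε : Fin n → Bool) : Fin n → Bool := fun j => !(ε j)

lemma dd_flipb (ε : Fin n → Bool) : dd (flipb ε) = n - dd ε := by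
  rw [← card_true ε, dd]
  congr 1; ext j; simp [flipb]

lemma flipb_flipb (ε : Fin n → Bool) : flipb (flipb ε) = ε := by
  funext j; simp [flipb]

lemma card_half {N : ℕ} :
    ((univ : Finset (Fin (2*N+1) → Bool)).filter fun ε => N+1 ≤ dd ε).card = 2^(2*N) := by
  set n := 2*N+1 with hn
  have hcards : ((univ : Finset (Fin n → Bool)).filter fun ε => N+1 ≤ dd ε).card
      + ((univ : Finset (Fin n → Bool)).filter fun ε => ¬ (N+1 ≤ dd ε)).card
      = 2^n := by
    have h := card_filter_add_card_filter_not (s := (univ : Finset (Fin n → Bool)))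
        (p := fun ε => N+1 ≤ dd ε)
    rwa [card_univ, Fintype.card_fun, Fintype.card_bool, Fintype.card_fin] at h
  have hbij : ((univ : Finset (Fin n → Bool)).filter fun ε => N+1 ≤ dd ε).card
      = ((univ : Finset (Fin n → Bool)).filter fun ε => ¬ (N+1 ≤ dd ε)).card := by
    refine Finset.card_bij' (fun ε _ => flipb ε) (fun ε _ => flipb ε) ?_ ?_ ?_ ?_
    · intro ε hε
      rw [mem_filter] at hε ⊢
      refine ⟨mem_univ _, ?_⟩
      have h1 := hε.2
      have h2 := dd_le ε
      rw [dd_flipb]; omega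
    · intro ε hε
      rw [mem_filter] at hε ⊢
      refine ⟨mem_univ _, ?_⟩
      have h1 := hε.2
      have h2 := dd_le ε
      rw [dd_flipb]; omega
    · intro ε _; exact flipb_flipb ε
    · intro ε _; exact flipb_flipb ε
  have hpow : 2^n = 2*2^(2*N) := by rw [hn]; ring
  omega

/-! ### The test function -/

def hh (N : ℕ) {n : ℕ} (ε : Fin n → Bool) : ℝ := if N+1 ≤ dd ε then (-1:ℝ) else 1

lemma hh_flipb {N : ℕ} (ε : Fin (2*N+1) → Bool) : hh N ε + hh N (flipb ε) = 0 := by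
  have h1 := dd_le ε
  have h2 := dd_flipb ε
  rw [hh, hh]
  by_cases hc : N+1 ≤ dd ε
  · rw [if_pos hc, if_neg (by omega)]; ring
  · rw [if_neg hc, if_pos (by omega)]; ring

lemma sum_hh {N : ℕ} : ∑ ε : Fin (2*N+1) → Bool, hh N ε = 0 := by
  refine Finset.sum_ninvolution flipb (fun ε => hh_flipb ε) (fun ε _ => ?_)
    (fun ε => mem_univ _) (fun ε => flipb_flipb ε)
  intro hfe
  exact Bool.not_ne_self (ε ⟨0, by omega⟩) (congrFun hfe ⟨0, by omega⟩)

lemma hh_ne_zero {N : ℕ} : (hh N : (Fin (2*N+1) → Bool) → ℝ) ≠ 0 := by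
  intro h0
  have h1 := congrFun h0 (fun _ => true)
  rw [hh] at h1
  have hd : dd (fun _ => true : Fin (2*N+1) → Bool) = 0 := by simp [dd]
  rw [hd, if_neg (by omega)] at h1
  norm_num at h1

lemma abs_hh {N n : ℕ} (ε : Fin n → Bool) : |hh N ε| = 1 := by
  rw [hh]; split <;> norm_num

/-! ### Lower bounds on `Σ_ε h(ε) P_u(ε)` -/

lemma G1 {N : ℕ} {u : ℝ} (hu0 : 0 ≤ u) (hu1 : u ≤ 1) :
    (2:ℝ)^(2*N+1) * (1 - (1+u)^N * (1-u)^(N+1))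
      ≤ ∑ ε : Fin (2*N+1) → Bool, hh N ε * PP u ε := by
  set n := 2*N+1 with hn
  have hsplit : ∀ ε : Fin n → Bool, hh N ε * PP u ε
      = PP u ε - 2 * (if N+1 ≤ dd ε then PP u ε else 0) := by
    intro ε
    rw [hh]
    by_cases hc : N+1 ≤ dd ε
    · rw [if_pos hc, if_pos hc]; ring
    · rw [if_neg hc, if_neg hc]; ring
  rw [Finset.sum_congr rfl (fun ε _ => hsplit ε), Finset.sum_sub_distrib, sum_PP,
    ← Finset.mul_sum, ← Finset.sum_filter]
  have hQ : ∀ ε ∈ (univ : Finset (Fin n → Bool)).filter fun ε => N+1 ≤ dd ε,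
      PP u ε ≤ (1+u)^N * (1-u)^(N+1) := by
    intro ε hε
    rw [mem_filter] at hε
    have hdd := hε.2
    have hddle := dd_le ε
    rw [PP_eq]
    have h1 : (1+u)^(n - dd ε) ≤ (1+u)^N :=
      pow_le_pow_right₀ (by linarith) (by omega)
    have h2 : (1-u)^(dd ε) ≤ (1-u)^(N+1) :=
      pow_le_pow_of_le_one (by linarith) (by linarith) hdd
    exact mul_le_mul h1 h2 (pow_nonneg (by linarith) _) (pow_nonneg (by linarith) _)
  have hsum := Finset.sum_le_card_nsmul _ _ _ hQ
  rw [card_half, nsmul_eq_mul] at hsum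
  push_cast at hsum
  have hpow : (2:ℝ)^n = 2 * (2:ℝ)^(2*N) := by rw [hn]; ring
  rw [hpow]
  nlinarith [hsum]

lemma Q_le_one {N : ℕ} {u : ℝ} (hu0 : 0 ≤ u) (hu1 : u ≤ 1) :
    (1+u)^N * (1-u)^(N+1) ≤ 1 := by
  have h1 : (1+u)^N * (1-u)^(N+1) = (1-u^2)^N * (1-u) := by
    have h : (1-u^2) = (1+u)*(1-u) := by ring
    rw [h, mul_pow, pow_succ, mul_assoc]
  rw [h1]
  have h2 : (1-u^2)^N ≤ 1 := pow_le_one₀ (by nlinarith) (by nlinarith)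
  nlinarith [pow_nonneg (by nlinarith : (0:ℝ) ≤ 1-u^2) N]

lemma Q_le_half {N : ℕ} {u : ℝ} (hu0 : 0 ≤ u) (hu1 : u ≤ 1) (hNu : 1 ≤ (N:ℝ) * u^2) :
    (1+u)^N * (1-u)^(N+1) ≤ 1/2 := by
  have h1 : (1+u)^N * (1-u)^(N+1) = (1-u^2)^N * (1-u) := by
    have h : (1-u^2) = (1+u)*(1-u) := by ring
    rw [h, mul_pow, pow_succ, mul_assoc]
  have h2 : (1-u^2)^N ≤ Real.exp (-u^2)^N := by
    apply pow_le_pow_left₀ (by nlinarith)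
    nlinarith [Real.add_one_le_exp (-u^2)]
  have h3 : Real.exp (-u^2)^N = Real.exp (-((N:ℝ)*u^2)) := by
    rw [← Real.exp_nat_mul]; ring_nf
  have h4 : Real.exp (-((N:ℝ)*u^2)) ≤ Real.exp (-1) := by
    apply Real.exp_le_exp.mpr; linarith
  have h5 : Real.exp (-1) ≤ 1/2 := by
    rw [Real.exp_neg]
    have h6 : (2:ℝ) ≤ Real.exp 1 := by
      nlinarith [Real.add_one_le_exp 1]
    have h7 : (Real.exp 1)⁻¹ ≤ (2:ℝ)⁻¹ := inv_anti₀ (by norm_num) h6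
    linarith [h7]
  rw [h1]
  have hnn : (0:ℝ) ≤ (1-u^2)^N := pow_nonneg (by nlinarith) N
  have hexpnn : (0:ℝ) ≤ Real.exp (-u^2)^N := pow_nonneg (Real.exp_nonneg _) N
  calc (1-u^2)^N * (1-u) ≤ (1-u^2)^N * 1 := by nlinarith
    _ = (1-u^2)^N := mul_one _
    _ ≤ Real.exp (-u^2)^N := h2
    _ = Real.exp (-((N:ℝ)*u^2)) := h3
    _ ≤ Real.exp (-1) := h4
    _ ≤ 1/2 := h5

/-! ### Integral representation -/

section IntegralRep

variable (h : (Fin n → Bool) → ℝ) (α : ℝ)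

noncomputable def ww (A : Finset (Fin n)) : ℝ := ∑ ε, h ε * walsh A ε

noncomputable def FFs (t : ℝ) : ℝ :=
  ∑ A ∈ (univ : Finset (Finset (Fin n))).filter (fun A => A.Nonempty),
    ww h A * (t ^ (α-1) * Real.exp (-(A.card * t)))

noncomputable def GG (u : ℝ) : ℝ := ∑ ε, h ε * PP u ε

lemma sum_F_eq (hsum0 : ∑ ε, h ε = 0) (u : ℝ) :
    ∑ A ∈ (univ : Finset (Finset (Fin n))).filter (fun A => A.Nonempty),
      ww h A * u ^ A.card = GG h u := by
  have hsplit := Finset.sum_filter_add_sum_filter_not (univ : Finset (Finset (Fin n)))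
      (fun A => A.Nonempty) (fun A => ww h A * u ^ A.card)
  have hne : (univ : Finset (Finset (Fin n))).filter (fun A => ¬ A.Nonempty) = {∅} := by
    ext A; simp [Finset.not_nonempty_iff_eq_empty]
  have hw0 : ww h ∅ = 0 := by
    simp [ww, walsh, hsum0]
  rw [hne, Finset.sum_singleton, hw0, zero_mul, add_zero] at hsplit
  rw [hsplit]
  calc ∑ A : Finset (Fin n), ww h A * u ^ A.card
      = ∑ A : Finset (Fin n), ∑ ε, h ε * (u ^ A.card * walsh A ε) := by
        refine Finset.sum_congr rfl fun A _ => ?_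
        rw [ww, Finset.sum_mul]
        exact Finset.sum_congr rfl fun ε _ => by ring
    _ = ∑ ε, ∑ A : Finset (Fin n), h ε * (u ^ A.card * walsh A ε) := Finset.sum_comm
    _ = GG h u := by
        refine Finset.sum_congr rfl fun ε _ => ?_
        rw [← Finset.mul_sum, sum_pow_walsh]

lemma ffs_eq (hsum0 : ∑ ε, h ε = 0) (t : ℝ) :
    FFs h α t = t ^ (α-1) * GG h (Real.exp (-t)) := by
  rw [← sum_F_eq h hsum0 (Real.exp (-t)), FFs, Finset.mul_sum]
  refine Finset.sum_congr rfl fun A hA => ?_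
  rw [← Real.exp_nat_mul]
  ring_nf

lemma integrable_term {k : ℝ} (hα : 0 < α) (hk : 0 < k) :
    IntegrableOn (fun t : ℝ => t ^ (α-1) * Real.exp (-(k*t))) (Ioi 0) := by
  have hgauss := integrableOn_rpow_mul_exp_neg_mul_rpow
      (by linarith : (-1:ℝ) < α - 1) (by norm_num : (0:ℝ) < 1) hk
  refine hgauss.congr_fun (fun t ht => ?_) measurableSet_Ioi
  simp only [Real.rpow_one]
  ring_nf

lemma integrable_FFs (hα : 0 < α) : IntegrableOn (FFs h α) (Ioi 0) := by
  apply MeasureTheory.integrable_finset_sum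
  intro A hA
  rw [Finset.mem_filter] at hA
  have hk : (0:ℝ) < A.card := by
    exact_mod_cast Finset.card_pos.mpr hA.2
  exact (integrable_term α hα hk).const_mul _

lemma integral_FFs (hα : 0 < α) :
    ∫ t in Ioi (0:ℝ), FFs h α t
      = Real.Gamma α * ∑ A ∈ (univ : Finset (Finset (Fin n))).filter (fun A => A.Nonempty),
          ((A.card : ℝ) ^ (-α) * ww h A) := by
  simp only [FFs]
  rw [MeasureTheory.integral_finset_sum]
  · rw [Finset.mul_sum]
    refine Finset.sum_congr rfl fun A hA => ?_
    rw [Finset.mem_filter] at hA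
    have hk : (0:ℝ) < A.card := by
      exact_mod_cast Finset.card_pos.mpr hA.2
    rw [MeasureTheory.integral_const_mul,
      Real.integral_rpow_mul_exp_neg_mul_Ioi hα hk]
    have hinv : ((1:ℝ)/(A.card:ℝ)) ^ α = (A.card:ℝ) ^ (-α) := by
      rw [one_div, Real.inv_rpow hk.le, ← Real.rpow_neg hk.le]
    rw [hinv]; ring
  · intro A hA
    rw [Finset.mem_filter] at hA
    have hk : (0:ℝ) < A.card := by
      exact_mod_cast Finset.card_pos.mpr hA.2
    exact (integrable_term α hα hk).const_mul _

lemma integral_FFs_lower (hα : 0 < α) (hsum0 : ∑ ε, h ε = 0) {T C : ℝ} (hT : 0 < T)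
    (hpos : ∀ t : ℝ, 0 < t → 0 ≤ GG h (Real.exp (-t)))
    (hbig : ∀ t : ℝ, 0 < t → t ≤ T → C ≤ GG h (Real.exp (-t))) :
    C * (T ^ α / α) ≤ ∫ t in Ioi (0:ℝ), FFs h α t := by
  have hI := integrable_FFs h α hα
  have hInt1 : IntegrableOn (fun t : ℝ => t ^ (α-1) * C) (Ioc 0 T) := by
    have h0 : IntervalIntegrable (fun t : ℝ => t ^ (α-1)) volume 0 T :=
      intervalIntegral.intervalIntegrable_rpow' (by linarith)
    exact ((intervalIntegrable_iff_integrableOn_Ioc_of_le hT.le).mp h0).mul_const C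
  have hInt2 : IntegrableOn (FFs h α) (Ioc 0 T) := hI.mono_set Ioc_subset_Ioi_self
  have m1 : ∫ t in Ioc (0:ℝ) T, t ^ (α-1) * C ≤ ∫ t in Ioc (0:ℝ) T, FFs h α t := by
    refine setIntegral_mono_on hInt1 hInt2 measurableSet_Ioc fun t ht => ?_
    rw [ffs_eq h α hsum0]
    exact mul_le_mul_of_nonneg_left (hbig t ht.1 ht.2) (Real.rpow_nonneg ht.1.le _)
  have m2 : ∫ t in Ioc (0:ℝ) T, FFs h α t ≤ ∫ t in Ioi (0:ℝ), FFs h α t := by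
    refine setIntegral_mono_set hI ?_ (HasSubset.Subset.eventuallyLE Ioc_subset_Ioi_self)
    refine (ae_restrict_iff' measurableSet_Ioi).mpr (Filter.Eventually.of_forall fun t ht => ?_)
    rw [ffs_eq h α hsum0]
    exact mul_nonneg (Real.rpow_nonneg (le_of_lt ht) _) (hpos t ht)
  have hval : ∫ t in Ioc (0:ℝ) T, t ^ (α-1) * C = (T ^ α / α) * C := by
    rw [← intervalIntegral.integral_of_le hT.le, intervalIntegral.integral_mul_const,
      integral_rpow (Or.inl (by linarith : (-1:ℝ) < α - 1))]
    have h1 : α - 1 + 1 = α := by ring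
    rw [h1, Real.zero_rpow (ne_of_gt hα), sub_zero]
  rw [hval] at m1
  linarith [m1, m2]

end IntegralRep

end DPL

lemma pnorm_point {n : ℕ} {p : ℝ} (hp : 0 < p) (g : (Fin n → Bool) → ℝ) (ε₀ : Fin n → Bool) :
    |g ε₀| / ((2:ℝ)^n)^(1/p) ≤ pnorm p g := by
  rw [pnorm]
  have h2n : (0:ℝ) < 2^n := by positivity
  have hsum : |g ε₀|^p ≤ ∑ ε, |g ε|^p :=
    Finset.single_le_sum (fun ε _ => Real.rpow_nonneg (abs_nonneg _) p) (mem_univ ε₀)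
  have hstep : (|g ε₀|^p / 2^n) ^ (1/p) ≤ ((∑ ε, |g ε|^p)/2^n)^(1/p) :=
    Real.rpow_le_rpow (by positivity) ((div_le_div_iff_of_pos_right h2n).mpr hsum) (by positivity)
  refine le_trans (le_of_eq ?_) hstep
  rw [Real.div_rpow (Real.rpow_nonneg (abs_nonneg _) _) h2n.le]
  congr 1
  rw [← Real.rpow_mul (abs_nonneg _), mul_one_div_cancel (ne_of_gt hp), Real.rpow_one]

lemma pnorm_hh {N n : ℕ} (p : ℝ) : pnorm p (DPL.hh N : (Fin n → Bool) → ℝ) = 1 := by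
  rw [pnorm]
  have h1 : ∀ ε : Fin n → Bool, |DPL.hh N ε| ^ p = 1 := fun ε => by
    rw [DPL.abs_hh, Real.one_rpow]
  rw [Finset.sum_congr rfl (fun ε _ => h1 ε), Finset.sum_const, card_univ,
    Fintype.card_fun, Fintype.card_bool, Fintype.card_fin, nsmul_eq_mul, mul_one]
  push_cast
  rw [div_self (by positivity), Real.one_rpow]

/-- **Lemma 3.2, lower bound** (inequality (3.13)): there is a universal `c > 0` such that for
every `p ∈ [2,∞)` and every `α ∈ (0,∞)`, `sup_n ‖Δ_{[n]}^{-α}‖_{p→p} ≥ c (log p)^α/(2^α Γ(1+α))`,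
i.e. there are `n ∈ ℕ` and a nonzero mean-zero `h : {-1,1}^n → ℝ` with
`‖Δ_{[n]}^{-α} h‖_p ≥ c (log p)^α/(2^α Γ(1+α)) ‖h‖_p`. -/
theorem deltaPow_neg_opNorm_lower :
    ∃ c : ℝ, 0 < c ∧ ∀ p : ℝ, 2 ≤ p → ∀ α : ℝ, 0 < α →
      ∃ n : ℕ, ∃ h : (Fin n → Bool) → ℝ, (∑ ε : Fin n → Bool, h ε) = 0 ∧ h ≠ 0 ∧
        c * (Real.log p) ^ α / ((2 : ℝ) ^ α * Real.Gamma (1 + α)) * pnorm p h ≤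
          pnorm p (deltaPow (univ : Finset (Fin n)) (-α) h) := by
  classical
  refine ⟨1/32, by norm_num, ?_⟩
  intro p hp α hα
  set N := ⌈p⌉₊ with hNdef
  refine ⟨2*N+1, DPL.hh N, DPL.sum_hh, DPL.hh_ne_zero, ?_⟩
  set n := 2*N+1 with hn
  have hp0 : (0:ℝ) < p := by linarith
  have hpN : p ≤ (N:ℝ) := Nat.le_ceil p
  have hlogp : 0 < Real.log p := Real.log_pos (by linarith)
  set T := Real.log p / 2 with hTdef
  have hT0 : 0 < T := by positivity
  -- bounds on exp
  have hu0 : ∀ t : ℝ, 0 < t → (0:ℝ) ≤ Real.exp (-t) := fun t _ => (Real.exp_pos _).le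
  have hu1 : ∀ t : ℝ, 0 < t → Real.exp (-t) ≤ 1 := by
    intro t ht
    have h := Real.exp_le_exp.mpr (by linarith : -t ≤ 0)
    simpa using h
  -- GG bounds
  have hGGpos : ∀ t : ℝ, 0 < t → 0 ≤ DPL.GG (DPL.hh N : (Fin n → Bool) → ℝ) (Real.exp (-t)) := by
    intro t ht
    have g1 := DPL.G1 (N := N) (hu0 t ht) (hu1 t ht)
    have q1 := DPL.Q_le_one (N := N) (hu0 t ht) (hu1 t ht)
    have h2n : (0:ℝ) < 2^(2*N+1) := by positivity
    have : DPL.GG (DPL.hh N : (Fin n → Bool) → ℝ) (Real.exp (-t))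
        = ∑ ε : Fin n → Bool, DPL.hh N ε * DPL.PP (Real.exp (-t)) ε := rfl
    rw [this]
    nlinarith [g1, q1, h2n]
  have hGGbig : ∀ t : ℝ, 0 < t → t ≤ T →
      (2:ℝ)^n / 2 ≤ DPL.GG (DPL.hh N : (Fin n → Bool) → ℝ) (Real.exp (-t)) := by
    intro t ht htT
    have hNu : 1 ≤ (N:ℝ) * (Real.exp (-t))^2 := by
      have e1 : (Real.exp (-t))^2 = Real.exp (-(2*t)) := by
        rw [← Real.exp_nat_mul]; congr 1; push_cast; ring
      have e2 : Real.exp (-Real.log p) ≤ Real.exp (-(2*t)) := by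
        apply Real.exp_le_exp.mpr
        rw [hTdef] at htT; linarith
      have e3 : Real.exp (-Real.log p) = p⁻¹ := by
        rw [Real.exp_neg, Real.exp_log hp0]
      have e4 : p⁻¹ ≤ (Real.exp (-t))^2 := by rw [e1]; rw [e3] at e2; exact e2
      calc (1:ℝ) = p * p⁻¹ := (mul_inv_cancel₀ (ne_of_gt hp0)).symm
        _ ≤ (N:ℝ) * (Real.exp (-t))^2 :=
          mul_le_mul hpN e4 (inv_nonneg.mpr hp0.le) (by positivity)
    have g1 := DPL.G1 (N := N) (hu0 t ht) (hu1 t ht)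
    have q2 := DPL.Q_le_half (N := N) (hu0 t ht) (hu1 t ht) hNu
    have h2n : (0:ℝ) < 2^(2*N+1) := by positivity
    have hGG : DPL.GG (DPL.hh N : (Fin n → Bool) → ℝ) (Real.exp (-t))
        = ∑ ε : Fin n → Bool, DPL.hh N ε * DPL.PP (Real.exp (-t)) ε := rfl
    rw [hGG, hn]
    nlinarith [g1, q2, h2n]
  -- the value of deltaPow at the all-true point
  set V : ℝ := ∑ A ∈ (univ : Finset (Finset (Fin n))).filter (fun A => A.Nonempty),
      ((A.card : ℝ) ^ (-α) * DPL.ww (DPL.hh N) A) with hV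
  have hval : deltaPow (univ : Finset (Fin n)) (-α) (DPL.hh N) (fun _ => true) = V / 2^n := by
    have hw : ∀ A : Finset (Fin n), walsh A (fun _ => true) = 1 := fun A => by simp [walsh]
    simp only [deltaPow, Finset.inter_univ, hw, mul_one]
    rw [← Finset.sum_filter]
    rw [hV, Finset.sum_div]
    refine Finset.sum_congr rfl fun A _ => ?_
    have : fourierCoef (DPL.hh N) A = DPL.ww (DPL.hh N) A / 2^n := rfl
    rw [this, mul_div_assoc]
  -- integral lower bound
  have hlow := DPL.integral_FFs_lower (DPL.hh N : (Fin n → Bool) → ℝ) α hα DPL.sum_hh hT0 hGGpos hGGbig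
  rw [DPL.integral_FFs (DPL.hh N : (Fin n → Bool) → ℝ) α hα, ← hV] at hlow
  have hΓ : 0 < Real.Gamma α := Real.Gamma_pos_of_pos hα
  have hΓ1 : Real.Gamma (1+α) = α * Real.Gamma α := by
    rw [add_comm, Real.Gamma_add_one (ne_of_gt hα)]
  have hΓ1pos : 0 < Real.Gamma (1+α) := by rw [hΓ1]; positivity
  have hTα : (0:ℝ) < T ^ α := Real.rpow_pos_of_pos hT0 α
  -- dval ≥ T^α / (2 Γ(1+α))
  have hdval : T ^ α / (2 * Real.Gamma (1+α)) ≤ V / 2^n := by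
    rw [div_le_div_iff₀ (by positivity) (by positivity)]
    have expand : (2:ℝ)^n / 2 * (T ^ α / α) * (2 * α) = T ^ α * 2^n := by
      field_simp
    have := mul_le_mul_of_nonneg_right hlow (by positivity : (0:ℝ) ≤ 2 * α)
    rw [expand] at this
    calc T ^ α * 2^n ≤ Real.Gamma α * V * (2*α) := this
      _ = V * (2 * Real.Gamma (1+α)) := by rw [hΓ1]; ring
  -- pnorm lower bound
  have hpnorm := pnorm_point (by linarith : (0:ℝ) < p)
      (deltaPow (univ : Finset (Fin n)) (-α) (DPL.hh N)) (fun _ => true)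
  rw [hval] at hpnorm
  have hVpos : (0:ℝ) < V / 2^n := lt_of_lt_of_le (by positivity) hdval
  rw [abs_of_pos hVpos] at hpnorm
  -- 2^{n/p} ≤ 16
  have hNp : (N:ℝ) < p + 1 := by
    rw [hNdef]
    exact_mod_cast Nat.ceil_lt_add_one hp0.le
  have h16 : ((2:ℝ)^n)^(1/p) ≤ 16 := by
    rw [← Real.rpow_natCast 2 n, ← Real.rpow_mul (by norm_num)]
    have hb : (n:ℝ) * (1/p) ≤ 4 := by
      rw [mul_one_div, div_le_iff₀ hp0]
      have : (n:ℝ) = 2*(N:ℝ)+1 := by rw [hn]; push_cast; ring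
      nlinarith
    calc (2:ℝ)^((n:ℝ)*(1/p)) ≤ (2:ℝ)^(4:ℝ) :=
        Real.rpow_le_rpow_of_exponent_le (by norm_num) hb
      _ = 16 := by
        rw [show (4:ℝ) = ((4:ℕ):ℝ) by norm_num, Real.rpow_natCast]; norm_num
  have hquot : V / 2^n / 16 ≤ V / 2^n / ((2:ℝ)^n)^(1/p) :=
    div_le_div_of_nonneg_left hVpos.le (by positivity) h16
  -- final chain
  rw [pnorm_hh, mul_one]
  have hTα2 : T ^ α = (Real.log p) ^ α / (2:ℝ)^α := by
    rw [hTdef, Real.div_rpow hlogp.le (by norm_num : (0:ℝ) ≤ 2)]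
  have final1 : (1:ℝ)/32 * (Real.log p) ^ α / ((2:ℝ)^α * Real.Gamma (1+α))
      = T ^ α / (2 * Real.Gamma (1+α)) / 16 := by
    rw [hTα2, div_div, div_div, div_eq_div_iff (by positivity) (by positivity)]
    ring
  calc (1:ℝ)/32 * (Real.log p) ^ α / ((2:ℝ)^α * Real.Gamma (1+α))
      = T ^ α / (2 * Real.Gamma (1+α)) / 16 := final1
    _ ≤ V / 2^n / 16 := by
        gcongr
    _ ≤ V / 2^n / ((2:ℝ)^n)^(1/p) := hquot
    _ ≤ pnorm p (deltaPow (univ : Finset (Fin n)) (-α) (DPL.hh N)) := hpnorm
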